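/- Let H be a finite-dimensional complex inner product space, let P_E and P_O be orthogonal projections on H with P_E + P_O = 1, let u and v be orthonormal vectors in H, let λ₊ > 0 > λ₋, and set Δ := λ₊|u⟩⟨u| + λ₋|v⟩⟨v|. If Δ commutes with P_E, i.e., [Δ, P_E] = 0, then ⟪P_E u, P_E v⟫ = 0 and ⟪P_O u, P_O v⟫ = 0. -/

import Mathlib

open Matrix
open scoped ComplexOrder Kronecker

/-- The trace norm `‖Y‖₁ = Tr √(Yᴴ Y)` of a complex matrix. -/
noncomputable def traceNorm {m : Type*} [Fintype m] [DecidableEq m]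
    (Y : Matrix m m ℂ) : ℝ :=
  ((Matrix.posSemidef_conjTranspose_mul_self Y).1.eigenvectorUnitary.1 *
    Matrix.diagonal ((fun x : ℝ => (x : ℂ)) ∘ (√·) ∘ (Matrix.posSemidef_conjTranspose_mul_self Y).1.eigenvalues) *
    (star (Matrix.posSemidef_conjTranspose_mul_self Y).1.eigenvectorUnitary : Matrix m m ℂ)).trace.re

/-- The inner product `⟪x, y⟫ = ∑ i, conj (x i) * y i` on `m → ℂ`. -/
noncomputable def cinner {m : Type*} [Fintype m] (x y : m → ℂ) : ℂ := star x ⬝ᵥ y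

/-- An orthogonal projection: a self-adjoint idempotent matrix. -/
def IsOrthoProj {m : Type*} [Fintype m] (P : Matrix m m ℂ) : Prop :=
  P.IsHermitian ∧ P * P = P

/-- An effect: an operator `S` with `0 ≤ S ≤ 1`. -/
def IsEffect {m : Type*} [Fintype m] [DecidableEq m] (S : Matrix m m ℂ) : Prop :=
  S.PosSemidef ∧ (1 - S).PosSemidef

/-- The rank-one operator `|ψ⟩⟨ψ|`. -/
noncomputable def outer {m : Type*} (ψ : m → ℂ) : Matrix m m ℂ :=
  Matrix.vecMulVec ψ (star ψ)

lemma outer_mulVec {m : Type*} [Fintype m] (ψ x : m → ℂ) :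
    (outer ψ).mulVec x = (star ψ ⬝ᵥ x) • ψ := by
  funext i
  simp [outer, Matrix.mulVec, Matrix.vecMulVec, dotProduct, Finset.mul_sum,
    mul_comm, mul_left_comm]

/-- **Theorem 3, forward implication.** If `Δ = λ₊|u⟩⟨u| + λ₋|v⟩⟨v|` with `u, v`
orthonormal and `λ₊ > 0 > λ₋` commutes with `P_E`, then the eigenvectors satisfy the
perfect LOCC-discriminability condition. -/
theorem commute_implies_parts_orthogonal
    {n : ℕ} (P_E P_O : Matrix (Fin n) (Fin n) ℂ)
    (hPE : IsOrthoProj P_E) (hPO : IsOrthoProj P_O) (hsum : P_E + P_O = 1)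
    (u v : Fin n → ℂ) (hu : cinner u u = 1) (hv : cinner v v = 1) (huv : cinner u v = 0)
    (lp lm : ℝ) (hlp : 0 < lp) (hlm : lm < 0)
    (Δ : Matrix (Fin n) (Fin n) ℂ) (hΔ : Δ = (lp : ℂ) • outer u + (lm : ℂ) • outer v)
    (hcomm : Δ * P_E = P_E * Δ) :
    cinner (P_E.mulVec u) (P_E.mulVec v) = 0 ∧
    cinner (P_O.mulVec u) (P_O.mulVec v) = 0 := by
  obtain ⟨hPEh, hPEi⟩ := hPE
  obtain ⟨hPOh, hPOi⟩ := hPO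
  simp only [cinner] at hu hv huv ⊢
  set a : ℂ := star u ⬝ᵥ P_E.mulVec v with ha
  have hΔvec : ∀ x : Fin n → ℂ, Δ.mulVec x
      = ((lp : ℂ) * (star u ⬝ᵥ x)) • u + ((lm : ℂ) * (star v ⬝ᵥ x)) • v := by
    intro x
    rw [hΔ, Matrix.add_mulVec, Matrix.smul_mulVec, Matrix.smul_mulVec,
      outer_mulVec, outer_mulVec]
    simp [smul_smul]
  have key : (lp : ℂ) * a = (lm : ℂ) * a := by
    have h1 : star u ⬝ᵥ (Δ * P_E).mulVec v = (lp : ℂ) * a := by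
      rw [← Matrix.mulVec_mulVec, hΔvec]
      simp [hu, huv, ha, mul_comm]
    have h2 : star u ⬝ᵥ (P_E * Δ).mulVec v = (lm : ℂ) * a := by
      rw [← Matrix.mulVec_mulVec, hΔvec]
      have h3 : (((lp : ℂ) * (star u ⬝ᵥ v)) • u + ((lm : ℂ) * (star v ⬝ᵥ v)) • v)
          = (lm : ℂ) • v := by
        simp [huv, hv]
      rw [h3]
      simp [Matrix.mulVec_smul, ha, mul_comm]
    rw [← h1, ← h2, hcomm]
  have ha0 : a = 0 := by
    have hne : (lp : ℂ) ≠ (lm : ℂ) := by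
      exact_mod_cast ne_of_gt (by linarith : lp > lm)
    have h4 : ((lp : ℂ) - (lm : ℂ)) * a = 0 := by linear_combination key
    exact (mul_eq_zero.mp h4).resolve_left (sub_ne_zero.mpr hne)
  have hherm : ∀ (P : Matrix (Fin n) (Fin n) ℂ), P.IsHermitian → P * P = P →
      star (P.mulVec u) ⬝ᵥ P.mulVec v = star u ⬝ᵥ P.mulVec v := by
    intro P hh hi
    rw [Matrix.star_mulVec, ← Matrix.dotProduct_mulVec, Matrix.mulVec_mulVec, hh.eq, hi]
  have hPO1 : P_O = 1 - P_E := eq_sub_of_add_eq' hsum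
  constructor
  · rw [hherm P_E hPEh hPEi]; exact ha0
  · rw [hherm P_O hPOh hPOi, hPO1, Matrix.sub_mulVec]
    simp [dotProduct_sub, huv, ← ha, ha0]
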